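/- Let n ≥ 1, let p ≥ 0 and q ≥ 0 be integers, and let X₁,…,X_p, Y₁,…,Y_q and X'₁,…,X'_p, Y'₁,…,Y'_q be n×n complex matrices. Set r = p+1+q if p is odd and r = p+2+q if p is even. Define the rn×rn matrix M_{X,Y} as the block-diagonal direct sum of: (a) the (p+1)n×(p+1)n matrix whose (k,k+1) n×n block equals X_k for k = 1,…,p and all other blocks zero, and (b) Y₁ ⊕ Y₂ ⊕ ⋯ ⊕ Y_q if p is odd, or 0_n ⊕ Y₁ ⊕ ⋯ ⊕ Y_q if p is even; define M_{X',Y'} analogously from the primed matrices. Define the rn×rn matrix J whose (k,k+1) n×n block equals I_n for k = 1,…,r−1 and all other blocks are zero. Then the pairs (J, M_{X,Y}) and (J, M_{X',Y'}) are consimilar if and only if there exists a nonsingular n×n complex matrix C such that: (i) C⁻¹·X_j·C = X'_j for every even j; (ii) conj(C)⁻¹·X_j·conj(C) = X'_j for every odd j; (iii) conj(C)⁻¹·Y_j·C = Y'_j for every odd j; and (iv) C⁻¹·Y_j·conj(C) = Y'_j for every even j. -/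

import Mathlib

/-- Two pairs of square complex matrices are consimilar if there is a
nonsingular `S` with `conj(S)⁻¹ * Aᵢ * S = Bᵢ` for `i = 1, 2`. -/
def ConsimilarPair {m : Type*} [Fintype m] [DecidableEq m]
    (A₁ A₂ B₁ B₂ : Matrix m m ℂ) : Prop :=
  ∃ S : Matrix m m ℂ, IsUnit S ∧
    (S.map (starRingEnd ℂ))⁻¹ * A₁ * S = B₁ ∧
    (S.map (starRingEnd ℂ))⁻¹ * A₂ * S = B₂

/-- `r = p + 1 + q` if `p` is odd, `r = p + 2 + q` if `p` is even. -/
def rBlocks (p q : ℕ) : ℕ := p + q + 2 - p % 2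

/-- The `rn × rn` matrix `J` whose `(k, k+1)` blocks are `I_n` and whose other
blocks are zero. -/
def Jmat (n p q : ℕ) :
    Matrix (Fin (rBlocks p q) × Fin n) (Fin (rBlocks p q) × Fin n) ℂ :=
  fun i j => if (j.1 : ℕ) = (i.1 : ℕ) + 1 ∧ i.2 = j.2 then 1 else 0

/-- The `rn × rn` matrix `M_{X,Y}`: the direct sum of the `(p+1)n × (p+1)n`
block matrix with `X₁, …, X_p` on the block superdiagonal, and
`Y₁ ⊕ ⋯ ⊕ Y_q` (if `p` is odd) or `0_n ⊕ Y₁ ⊕ ⋯ ⊕ Y_q` (if `p` is even).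
Here `X` and `Y` are 0-indexed, so `X ⟨k⟩` is `X_{k+1}`. -/
def Mmat (n p q : ℕ) (X : Fin p → Matrix (Fin n) (Fin n) ℂ)
    (Y : Fin q → Matrix (Fin n) (Fin n) ℂ) :
    Matrix (Fin (rBlocks p q) × Fin n) (Fin (rBlocks p q) × Fin n) ℂ :=
  fun i j =>
    if h1 : (i.1 : ℕ) < p ∧ (j.1 : ℕ) = (i.1 : ℕ) + 1 then X ⟨(i.1 : ℕ), h1.1⟩ i.2 j.2
    else if h2 : i.1 = j.1 ∧ p + 2 - p % 2 ≤ (i.1 : ℕ) then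
      Y ⟨(i.1 : ℕ) - (p + 2 - p % 2), by
        have hi := i.1.isLt; simp only [rBlocks] at hi; omega⟩ i.2 j.2
    else 0

section Aux

variable {n p q : ℕ}

lemma p_lt_r : p < rBlocks p q := by unfold rBlocks; omega

lemma Jmat_apply (i j : Fin (rBlocks p q)) (a b : Fin n) :
    Jmat n p q (i, a) (j, b) = if (j : ℕ) = (i : ℕ) + 1 ∧ a = b then 1 else 0 := rfl

lemma Jmul (A : Matrix (Fin (rBlocks p q) × Fin n) (Fin (rBlocks p q) × Fin n) ℂ)
    (i j : Fin (rBlocks p q)) (a b : Fin n) :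
    (Jmat n p q * A) (i, a) (j, b) =
      if h : (i : ℕ) + 1 < rBlocks p q then A (⟨(i : ℕ) + 1, h⟩, a) (j, b) else 0 := by
  rw [Matrix.mul_apply]
  split
  · next h =>
    rw [Fintype.sum_eq_single ((⟨(i : ℕ) + 1, h⟩ : Fin (rBlocks p q)), a)]
    · rw [Jmat_apply, if_pos ⟨rfl, rfl⟩, one_mul]
    · rintro ⟨k, c⟩ hx
      rw [Jmat_apply, ite_mul, one_mul, zero_mul, ite_eq_right_iff]
      rintro ⟨h1, h2⟩
      exact absurd (Prod.ext (Fin.ext h1) h2.symm) hx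
  · next h =>
    apply Finset.sum_eq_zero
    rintro ⟨k, c⟩ -
    rw [Jmat_apply, ite_mul, one_mul, zero_mul, ite_eq_right_iff]
    rintro ⟨h1, -⟩
    exact absurd (h1 ▸ k.isLt) h

lemma mulJ (A : Matrix (Fin (rBlocks p q) × Fin n) (Fin (rBlocks p q) × Fin n) ℂ)
    (i j : Fin (rBlocks p q)) (a b : Fin n) :
    (A * Jmat n p q) (i, a) (j, b) =
      if 0 < (j : ℕ) then
        A (i, a) (⟨(j : ℕ) - 1, Nat.lt_of_le_of_lt (Nat.sub_le _ _) j.isLt⟩, b) else 0 := by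
  rw [Matrix.mul_apply]
  split
  · next h =>
    rw [Fintype.sum_eq_single ((⟨(j : ℕ) - 1, Nat.lt_of_le_of_lt (Nat.sub_le _ _) j.isLt⟩ :
        Fin (rBlocks p q)), b)]
    · rw [Jmat_apply, if_pos ⟨by simp; omega, rfl⟩, mul_one]
    · rintro ⟨k, c⟩ hx
      rw [Jmat_apply, mul_ite, mul_one, mul_zero, ite_eq_right_iff]
      rintro ⟨h1, h2⟩
      refine absurd (Prod.ext (Fin.ext ?_) h2) hx
      simp only [] at h1 ⊢
      omega
  · next h =>
    apply Finset.sum_eq_zero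
    rintro ⟨k, c⟩ -
    rw [Jmat_apply, mul_ite, mul_one, mul_zero, ite_eq_right_iff]
    rintro ⟨h1, -⟩
    omega

lemma Mmat_apply (X : Fin p → Matrix (Fin n) (Fin n) ℂ)
    (Y : Fin q → Matrix (Fin n) (Fin n) ℂ) (i j : Fin (rBlocks p q)) (a b : Fin n) :
    Mmat n p q X Y (i, a) (j, b) =
      if h1 : (i : ℕ) < p ∧ (j : ℕ) = (i : ℕ) + 1 then X ⟨(i : ℕ), h1.1⟩ a b
      else if h2 : i = j ∧ p + 2 - p % 2 ≤ (i : ℕ) then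
        Y ⟨(i : ℕ) - (p + 2 - p % 2), by
          have hi := i.isLt; simp only [rBlocks] at hi; omega⟩ a b
      else 0 := rfl

lemma Mmat_apply_X (X : Fin p → Matrix (Fin n) (Fin n) ℂ)
    (Y : Fin q → Matrix (Fin n) (Fin n) ℂ) (i j : Fin (rBlocks p q)) (a b : Fin n)
    (hx : (i : ℕ) < p) (hij : (j : ℕ) = (i : ℕ) + 1) (jX : Fin p)
    (hjX : (jX : ℕ) = (i : ℕ)) :
    Mmat n p q X Y (i, a) (j, b) = X jX a b := by
  rw [Mmat_apply, dif_pos ⟨hx, hij⟩]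
  exact congrFun (congrFun (congrArg X (Fin.ext hjX.symm)) a) b

lemma Mmat_apply_Y (X : Fin p → Matrix (Fin n) (Fin n) ℂ)
    (Y : Fin q → Matrix (Fin n) (Fin n) ℂ) (i j : Fin (rBlocks p q)) (a b : Fin n)
    (hij : i = j) (hm : p + 2 - p % 2 ≤ (i : ℕ)) (jY : Fin q)
    (hjY : (jY : ℕ) = (i : ℕ) - (p + 2 - p % 2)) :
    Mmat n p q X Y (i, a) (j, b) = Y jY a b := by
  rw [Mmat_apply, dif_neg (by rintro ⟨h1, -⟩; omega), dif_pos ⟨hij, hm⟩]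
  exact congrFun (congrFun (congrArg Y (Fin.ext hjY.symm)) a) b

lemma Mmat_apply_zero (X : Fin p → Matrix (Fin n) (Fin n) ℂ)
    (Y : Fin q → Matrix (Fin n) (Fin n) ℂ) (i j : Fin (rBlocks p q)) (a b : Fin n)
    (hx : ¬ ((i : ℕ) < p ∧ (j : ℕ) = (i : ℕ) + 1))
    (hy : ¬ (i = j ∧ p + 2 - p % 2 ≤ (i : ℕ))) :
    Mmat n p q X Y (i, a) (j, b) = 0 := by
  rw [Mmat_apply, dif_neg hx, dif_neg hy]

lemma Mmul_X (X : Fin p → Matrix (Fin n) (Fin n) ℂ)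
    (Y : Fin q → Matrix (Fin n) (Fin n) ℂ)
    (A : Matrix (Fin (rBlocks p q) × Fin n) (Fin (rBlocks p q) × Fin n) ℂ)
    (jX : Fin p) (hk1 : (jX : ℕ) < rBlocks p q) (hk2 : (jX : ℕ) + 1 < rBlocks p q)
    (j : Fin (rBlocks p q)) (a b : Fin n) :
    (Mmat n p q X Y * A) ((⟨(jX : ℕ), hk1⟩ : Fin (rBlocks p q)), a) (j, b) =
      ∑ c, X jX a c * A ((⟨(jX : ℕ) + 1, hk2⟩ : Fin (rBlocks p q)), c) (j, b) := by
  rw [Matrix.mul_apply, Fintype.sum_prod_type,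
    Fintype.sum_eq_single (⟨(jX : ℕ) + 1, hk2⟩ : Fin (rBlocks p q))]
  · refine Finset.sum_congr rfl fun c _ => ?_
    rw [Mmat_apply_X X Y _ _ _ _ jX.isLt rfl jX rfl]
  · intro k' hk'
    apply Finset.sum_eq_zero
    intro c _
    rw [Mmat_apply_zero, zero_mul]
    · rintro ⟨-, h2⟩
      exact hk' (Fin.ext h2)
    · rintro ⟨-, h2⟩
      have h2' : p + 2 - p % 2 ≤ (jX : ℕ) := h2
      have := jX.isLt
      omega

lemma Mmul_Y (X : Fin p → Matrix (Fin n) (Fin n) ℂ)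
    (Y : Fin q → Matrix (Fin n) (Fin n) ℂ)
    (A : Matrix (Fin (rBlocks p q) × Fin n) (Fin (rBlocks p q) × Fin n) ℂ)
    (jY : Fin q) (k : ℕ) (hk : k = (jY : ℕ) + (p + 2 - p % 2)) (hk1 : k < rBlocks p q)
    (j : Fin (rBlocks p q)) (a b : Fin n) :
    (Mmat n p q X Y * A) ((⟨k, hk1⟩ : Fin (rBlocks p q)), a) (j, b) =
      ∑ c, Y jY a c * A ((⟨k, hk1⟩ : Fin (rBlocks p q)), c) (j, b) := by
  have hkp : ¬ k < p := by unfold rBlocks at hk1; omega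
  rw [Matrix.mul_apply, Fintype.sum_prod_type,
    Fintype.sum_eq_single (⟨k, hk1⟩ : Fin (rBlocks p q))]
  · refine Finset.sum_congr rfl fun c _ => ?_
    rw [Mmat_apply_Y X Y _ _ _ _ rfl (by show p + 2 - p % 2 ≤ k; omega) jY
      (by show (jY : ℕ) = k - (p + 2 - p % 2); omega)]
  · intro k' hk'
    apply Finset.sum_eq_zero
    intro c _
    rw [Mmat_apply_zero, zero_mul]
    · rintro ⟨h1, -⟩
      have h1' : k < p := h1
      exact hkp h1'
    · rintro ⟨h1, -⟩
      exact hk' h1.symm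

lemma mulM_X (X : Fin p → Matrix (Fin n) (Fin n) ℂ)
    (Y : Fin q → Matrix (Fin n) (Fin n) ℂ)
    (A : Matrix (Fin (rBlocks p q) × Fin n) (Fin (rBlocks p q) × Fin n) ℂ)
    (jX : Fin p) (hj1 : (jX : ℕ) + 1 < rBlocks p q) (hj2 : (jX : ℕ) < rBlocks p q)
    (i : Fin (rBlocks p q)) (a b : Fin n) :
    (A * Mmat n p q X Y) (i, a) ((⟨(jX : ℕ) + 1, hj1⟩ : Fin (rBlocks p q)), b) =
      ∑ c, A (i, a) ((⟨(jX : ℕ), hj2⟩ : Fin (rBlocks p q)), c) * X jX c b := by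
  rw [Matrix.mul_apply, Fintype.sum_prod_type,
    Fintype.sum_eq_single (⟨(jX : ℕ), hj2⟩ : Fin (rBlocks p q))]
  · refine Finset.sum_congr rfl fun c _ => ?_
    rw [Mmat_apply_X X Y _ _ _ _ jX.isLt rfl jX rfl]
  · intro k' hk'
    apply Finset.sum_eq_zero
    intro c _
    rw [Mmat_apply_zero, mul_zero]
    · rintro ⟨-, h2⟩
      have h2' : (jX : ℕ) + 1 = (k' : ℕ) + 1 := h2
      exact hk' (Fin.ext (show (k' : ℕ) = (jX : ℕ) by omega))
    · rintro ⟨h1, h2⟩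
      rw [h1] at h2
      have h2' : p + 2 - p % 2 ≤ (jX : ℕ) + 1 := h2
      have := jX.isLt
      omega

lemma mulM_Y (X : Fin p → Matrix (Fin n) (Fin n) ℂ)
    (Y : Fin q → Matrix (Fin n) (Fin n) ℂ)
    (A : Matrix (Fin (rBlocks p q) × Fin n) (Fin (rBlocks p q) × Fin n) ℂ)
    (jY : Fin q) (k : ℕ) (hk : k = (jY : ℕ) + (p + 2 - p % 2)) (hk1 : k < rBlocks p q)
    (i : Fin (rBlocks p q)) (a b : Fin n) :
    (A * Mmat n p q X Y) (i, a) ((⟨k, hk1⟩ : Fin (rBlocks p q)), b) =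
      ∑ c, A (i, a) ((⟨k, hk1⟩ : Fin (rBlocks p q)), c) * Y jY c b := by
  rw [Matrix.mul_apply, Fintype.sum_prod_type,
    Fintype.sum_eq_single (⟨k, hk1⟩ : Fin (rBlocks p q))]
  · refine Finset.sum_congr rfl fun c _ => ?_
    rw [Mmat_apply_Y X Y _ _ _ _ rfl (by show p + 2 - p % 2 ≤ k; omega) jY
      (by show (jY : ℕ) = k - (p + 2 - p % 2); omega)]
  · intro k' hk'
    apply Finset.sum_eq_zero
    intro c _
    rw [Mmat_apply_zero, mul_zero]
    · rintro ⟨h1, h2⟩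
      have h1' : (k' : ℕ) < p := h1
      have h2' : k = (k' : ℕ) + 1 := h2
      omega
    · rintro ⟨h1, -⟩
      exact hk' h1

def DiagS (n p q : ℕ) (D : Fin (rBlocks p q) → Matrix (Fin n) (Fin n) ℂ) :
    Matrix (Fin (rBlocks p q) × Fin n) (Fin (rBlocks p q) × Fin n) ℂ :=
  fun x y => if x.1 = y.1 then D x.1 x.2 y.2 else 0

lemma DiagS_apply (D : Fin (rBlocks p q) → Matrix (Fin n) (Fin n) ℂ)
    (i j : Fin (rBlocks p q)) (a b : Fin n) :
    DiagS n p q D (i, a) (j, b) = if i = j then D i a b else 0 := rfl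

lemma mul_diag (D : Fin (rBlocks p q) → Matrix (Fin n) (Fin n) ℂ)
    (A : Matrix (Fin (rBlocks p q) × Fin n) (Fin (rBlocks p q) × Fin n) ℂ)
    (i j : Fin (rBlocks p q)) (a b : Fin n) :
    (A * DiagS n p q D) (i, a) (j, b) = ∑ c, A (i, a) (j, c) * D j c b := by
  rw [Matrix.mul_apply, Fintype.sum_prod_type, Fintype.sum_eq_single j]
  · refine Finset.sum_congr rfl fun c _ => ?_
    rw [DiagS_apply, if_pos rfl]
  · intro k' hk'
    apply Finset.sum_eq_zero
    intro c _
    rw [DiagS_apply, if_neg hk', mul_zero]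

lemma diag_mul (D : Fin (rBlocks p q) → Matrix (Fin n) (Fin n) ℂ)
    (A : Matrix (Fin (rBlocks p q) × Fin n) (Fin (rBlocks p q) × Fin n) ℂ)
    (i j : Fin (rBlocks p q)) (a b : Fin n) :
    (DiagS n p q D * A) (i, a) (j, b) = ∑ c, D i a c * A (i, c) (j, b) := by
  rw [Matrix.mul_apply, Fintype.sum_prod_type, Fintype.sum_eq_single i]
  · refine Finset.sum_congr rfl fun c _ => ?_
    rw [DiagS_apply, if_pos rfl]
  · intro k' hk'
    apply Finset.sum_eq_zero
    intro c _
    rw [DiagS_apply, if_neg (fun h => hk' h.symm), zero_mul]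

lemma DiagS_map (D : Fin (rBlocks p q) → Matrix (Fin n) (Fin n) ℂ) :
    (DiagS n p q D).map (starRingEnd ℂ) =
      DiagS n p q (fun k => (D k).map (starRingEnd ℂ)) := by
  ext ⟨i, a⟩ ⟨j, b⟩
  simp [DiagS, Matrix.map_apply, apply_ite (starRingEnd ℂ)]

lemma r_pos : 0 < rBlocks p q := by unfold rBlocks; omega

lemma shiftRel (S : Matrix (Fin (rBlocks p q) × Fin n) (Fin (rBlocks p q) × Fin n) ℂ)
    (hJ : Jmat n p q * S = S.map (starRingEnd ℂ) * Jmat n p q)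
    (i j : Fin (rBlocks p q)) (a b : Fin n) (h : (i : ℕ) + 1 < rBlocks p q) :
    S ((⟨(i : ℕ) + 1, h⟩ : Fin (rBlocks p q)), a) (j, b) =
      if 0 < (j : ℕ) then
        starRingEnd ℂ (S (i, a)
          ((⟨(j : ℕ) - 1, Nat.lt_of_le_of_lt (Nat.sub_le _ _) j.isLt⟩ : Fin (rBlocks p q)), b))
      else 0 := by
  have h2 := congrFun (congrFun hJ (i, a)) (j, b)
  rw [Jmul, mulJ, dif_pos h] at h2
  rw [h2]
  split <;> simp [Matrix.map_apply]

lemma lower_zero (S : Matrix (Fin (rBlocks p q) × Fin n) (Fin (rBlocks p q) × Fin n) ℂ)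
    (hJ : Jmat n p q * S = S.map (starRingEnd ℂ) * Jmat n p q) :
    ∀ (jv : ℕ) (j i : Fin (rBlocks p q)) (a b : Fin n),
      (j : ℕ) = jv → (j : ℕ) < (i : ℕ) → S (i, a) (j, b) = 0 := by
  intro jv
  induction jv with
  | zero =>
    intro j i a b hj hlt
    obtain ⟨iv, hiv⟩ : ∃ iv, (i : ℕ) = iv + 1 := ⟨(i : ℕ) - 1, by omega⟩
    have h : iv + 1 < rBlocks p q := hiv ▸ i.isLt
    have hi : i = ⟨iv + 1, h⟩ := Fin.ext hiv
    rw [hi]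
    have hz := shiftRel S hJ ⟨iv, by omega⟩ j a b h
    rw [if_neg (by omega)] at hz
    exact hz
  | succ jv ih =>
    intro j i a b hj hlt
    obtain ⟨iv, hiv⟩ : ∃ iv, (i : ℕ) = iv + 1 := ⟨(i : ℕ) - 1, by omega⟩
    have h : iv + 1 < rBlocks p q := hiv ▸ i.isLt
    have hi : i = ⟨iv + 1, h⟩ := Fin.ext hiv
    rw [hi]
    have hz := shiftRel S hJ ⟨iv, by omega⟩ j a b h
    rw [if_pos (by omega)] at hz
    rw [hz, ih ⟨(j : ℕ) - 1, Nat.lt_of_le_of_lt (Nat.sub_le _ _) j.isLt⟩ ⟨iv, by omega⟩ a b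
      (by show (j : ℕ) - 1 = jv; omega) (by show (j : ℕ) - 1 < iv; omega), map_zero]

lemma diag_step (S : Matrix (Fin (rBlocks p q) × Fin n) (Fin (rBlocks p q) × Fin n) ℂ)
    (hJ : Jmat n p q * S = S.map (starRingEnd ℂ) * Jmat n p q)
    (k : ℕ) (h : k + 1 < rBlocks p q) (a b : Fin n) :
    S ((⟨k + 1, h⟩ : Fin (rBlocks p q)), a) ((⟨k + 1, h⟩ : Fin (rBlocks p q)), b) =
      starRingEnd ℂ (S ((⟨k, by omega⟩ : Fin (rBlocks p q)), a)
        ((⟨k, by omega⟩ : Fin (rBlocks p q)), b)) := by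
  have hz := shiftRel S hJ ⟨k, by omega⟩ ⟨k + 1, h⟩ a b h
  rw [if_pos (by show 0 < k + 1; omega)] at hz
  exact hz

lemma diag_form (S : Matrix (Fin (rBlocks p q) × Fin n) (Fin (rBlocks p q) × Fin n) ℂ)
    (hJ : Jmat n p q * S = S.map (starRingEnd ℂ) * Jmat n p q) :
    ∀ (k : ℕ) (h : k < rBlocks p q) (a b : Fin n),
      S ((⟨k, h⟩ : Fin (rBlocks p q)), a) ((⟨k, h⟩ : Fin (rBlocks p q)), b) =
        if Even k then S ((⟨0, r_pos⟩ : Fin (rBlocks p q)), a) ((⟨0, r_pos⟩ : Fin (rBlocks p q)), b)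
        else starRingEnd ℂ
          (S ((⟨0, r_pos⟩ : Fin (rBlocks p q)), a) ((⟨0, r_pos⟩ : Fin (rBlocks p q)), b)) := by
  intro k
  induction k with
  | zero =>
    intro h a b
    rw [if_pos Even.zero]
  | succ k ih =>
    intro h a b
    rw [diag_step S hJ k h a b, ih (by omega) a b]
    rcases Nat.even_or_odd k with hk | hk
    · rw [if_pos hk, if_neg (by simp [Nat.even_add_one, hk])]
    · rw [if_neg (by simp [Nat.not_even_iff_odd.mpr hk]), if_pos (by simp [Nat.even_add_one, Nat.not_even_iff_odd.mpr hk]),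
        Complex.conj_conj]

lemma mix_to_eq {m : Type*} [Fintype m] [DecidableEq m] {P Q A B : Matrix m m ℂ}
    (h : IsUnit P.det) (hE : P⁻¹ * A * Q = B) : A * Q = P * B := by
  rw [← hE]
  simp only [← Matrix.mul_assoc]
  rw [Matrix.mul_nonsing_inv _ h, Matrix.one_mul]

lemma mix_of_eq {m : Type*} [Fintype m] [DecidableEq m] {P Q A B : Matrix m m ℂ}
    (h : IsUnit P.det) (hE : A * Q = P * B) : P⁻¹ * A * Q = B := by
  rw [Matrix.mul_assoc, hE, ← Matrix.mul_assoc, Matrix.nonsing_inv_mul _ h, Matrix.one_mul]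

end Aux

/-- `(J, M_{X,Y})` and `(J, M_{X',Y'})` are consimilar iff there is a
nonsingular `C` such that (with 1-based indices `j`): `C⁻¹·X_j·C = X'_j` for
even `j`; `conj(C)⁻¹·X_j·conj(C) = X'_j` for odd `j`;
`conj(C)⁻¹·Y_j·C = Y'_j` for odd `j`; `C⁻¹·Y_j·conj(C) = Y'_j` for even `j`. -/
theorem stmt_11 {n : ℕ} (hn : 1 ≤ n) (p q : ℕ)
    (X X' : Fin p → Matrix (Fin n) (Fin n) ℂ)
    (Y Y' : Fin q → Matrix (Fin n) (Fin n) ℂ) :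
    ConsimilarPair (Jmat n p q) (Mmat n p q X Y) (Jmat n p q) (Mmat n p q X' Y') ↔
      ∃ C : Matrix (Fin n) (Fin n) ℂ, IsUnit C ∧
        (∀ j : Fin p, Even ((j : ℕ) + 1) → C⁻¹ * X j * C = X' j) ∧
        (∀ j : Fin p, Odd ((j : ℕ) + 1) →
          (C.map (starRingEnd ℂ))⁻¹ * X j * (C.map (starRingEnd ℂ)) = X' j) ∧
        (∀ j : Fin q, Odd ((j : ℕ) + 1) →
          (C.map (starRingEnd ℂ))⁻¹ * Y j * C = Y' j) ∧
        (∀ j : Fin q, Even ((j : ℕ) + 1) →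
          C⁻¹ * Y j * (C.map (starRingEnd ℂ)) = Y' j) := by
  constructor
  · -- forward
    rintro ⟨S, hS, h1, h2⟩
    have hdetS : IsUnit S.det := (Matrix.isUnit_iff_isUnit_det S).mp hS
    have hST : S * S⁻¹ = 1 := Matrix.mul_nonsing_inv S hdetS
    have hTS : S⁻¹ * S = 1 := Matrix.nonsing_inv_mul S hdetS
    have hScinv : S.map (starRingEnd ℂ) * (S⁻¹).map (starRingEnd ℂ) = 1 := by
      rw [← Matrix.map_mul, hST, Matrix.map_one _ (map_zero _) (map_one _)]
    have hScU : IsUnit (S.map (starRingEnd ℂ)) := (Matrix.isUnit_iff_isUnit_det _).mpr (Matrix.isUnit_det_of_right_inverse hScinv)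
    have hScdet : IsUnit (S.map (starRingEnd ℂ)).det :=
      (Matrix.isUnit_iff_isUnit_det _).mp hScU
    have hTc : (S⁻¹).map (starRingEnd ℂ) * S.map (starRingEnd ℂ) = 1 := by
      rw [← Matrix.map_mul, hTS, Matrix.map_one _ (map_zero _) (map_one _)]
    have hJ : Jmat n p q * S = S.map (starRingEnd ℂ) * Jmat n p q := mix_to_eq hScdet h1
    have hM : Mmat n p q X Y * S = S.map (starRingEnd ℂ) * Mmat n p q X' Y' :=
      mix_to_eq hScdet h2
    set C : Matrix (Fin n) (Fin n) ℂ :=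
      fun a b => S ((⟨0, r_pos⟩ : Fin (rBlocks p q)), a)
        ((⟨0, r_pos⟩ : Fin (rBlocks p q)), b) with hCdef
    have hJT : Jmat n p q * S⁻¹ = (S⁻¹).map (starRingEnd ℂ) * Jmat n p q := by
      have e1 := congrArg (fun Z => (S⁻¹).map (starRingEnd ℂ) * Z * S⁻¹) hJ
      simp only [← Matrix.mul_assoc] at e1
      rw [Matrix.mul_assoc ((S⁻¹).map (starRingEnd ℂ) * Jmat n p q) S S⁻¹, hST,
        Matrix.mul_one, hTc, Matrix.one_mul] at e1
      exact e1.symm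
    have hTlow := lower_zero (S⁻¹) hJT
    set Dm : Matrix (Fin n) (Fin n) ℂ :=
      Matrix.of fun a b => S⁻¹ ((⟨0, r_pos⟩ : Fin (rBlocks p q)), a)
        ((⟨0, r_pos⟩ : Fin (rBlocks p q)), b) with hDm
    have hCD : C * Dm = 1 := by
      ext a b
      rw [Matrix.mul_apply]
      have h1' := congrFun (congrFun hST ((⟨0, r_pos⟩ : Fin (rBlocks p q)), a))
        ((⟨0, r_pos⟩ : Fin (rBlocks p q)), b)
      rw [Matrix.mul_apply, Fintype.sum_prod_type] at h1'
      rw [Fintype.sum_eq_single (⟨0, r_pos⟩ : Fin (rBlocks p q))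
        (fun k' hk' => Finset.sum_eq_zero fun c _ => by
          rw [hTlow 0 ⟨0, r_pos⟩ k' c b rfl
            (show 0 < (k' : ℕ) from Nat.pos_of_ne_zero fun h => hk' (Fin.ext h)),
            mul_zero])] at h1'
      exact h1'.trans (by simp [Matrix.one_apply, Prod.ext_iff])
    have hCU : IsUnit C := (Matrix.isUnit_iff_isUnit_det _).mpr (Matrix.isUnit_det_of_right_inverse hCD)
    have hCdet : IsUnit C.det := (Matrix.isUnit_iff_isUnit_det C).mp hCU
    have hCcinv : C.map (starRingEnd ℂ) * Dm.map (starRingEnd ℂ) = 1 := by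
      rw [← Matrix.map_mul, hCD, Matrix.map_one _ (map_zero _) (map_one _)]
    have hCcU : IsUnit (C.map (starRingEnd ℂ)) := (Matrix.isUnit_iff_isUnit_det _).mpr (Matrix.isUnit_det_of_right_inverse hCcinv)
    have hCcdet : IsUnit (C.map (starRingEnd ℂ)).det :=
      (Matrix.isUnit_iff_isUnit_det _).mp hCcU
    have hCcc : (C.map (starRingEnd ℂ)).map (starRingEnd ℂ) = C := by
      ext a b; simp [Matrix.map_apply]
    have hdiag := diag_form S hJ
    have keyX : ∀ j : Fin p,
        X j * (if Even ((j : ℕ) + 1) then C else C.map (starRingEnd ℂ)) =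
          ((if Even ((j : ℕ)) then C else C.map (starRingEnd ℂ)).map (starRingEnd ℂ)) *
            X' j := by
      intro j
      have ltj : (j : ℕ) < rBlocks p q := lt_trans j.isLt p_lt_r
      have ltj1 : (j : ℕ) + 1 < rBlocks p q := by
        have h := p_lt_r (p := p) (q := q); have := j.isLt; omega
      ext a b
      have hL := congrFun (congrFun hM ((⟨(j : ℕ), ltj⟩ : Fin (rBlocks p q)), a))
        ((⟨(j : ℕ) + 1, ltj1⟩ : Fin (rBlocks p q)), b)
      rw [Mmul_X X Y S j ltj ltj1 ⟨(j : ℕ) + 1, ltj1⟩ a b] at hL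
      rw [mulM_X X' Y' (S.map (starRingEnd ℂ)) j ltj1 ltj ⟨(j : ℕ), ltj⟩ a b] at hL
      rw [Matrix.mul_apply, Matrix.mul_apply]
      calc ∑ c, X j a c * (if Even ((j : ℕ) + 1) then C else C.map (starRingEnd ℂ)) c b
          = ∑ c, X j a c *
              S ((⟨(j : ℕ) + 1, ltj1⟩ : Fin (rBlocks p q)), c)
                ((⟨(j : ℕ) + 1, ltj1⟩ : Fin (rBlocks p q)), b) := by
            refine Finset.sum_congr rfl fun c _ => ?_
            rw [hdiag ((j : ℕ) + 1) ltj1 c b]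
            by_cases hpar : Even ((j : ℕ) + 1)
            · rw [if_pos hpar, if_pos hpar]
            · rw [if_neg hpar, if_neg hpar]; rfl
        _ = ∑ c, (S.map (starRingEnd ℂ)) ((⟨(j : ℕ), ltj⟩ : Fin (rBlocks p q)), a)
              ((⟨(j : ℕ), ltj⟩ : Fin (rBlocks p q)), c) * X' j c b := hL
        _ = ∑ c, ((if Even ((j : ℕ)) then C else C.map (starRingEnd ℂ)).map
              (starRingEnd ℂ)) a c * X' j c b := by
            refine Finset.sum_congr rfl fun c _ => ?_
            rw [Matrix.map_apply, hdiag (j : ℕ) ltj a c]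
            by_cases hpar : Even ((j : ℕ))
            · rw [if_pos hpar, if_pos hpar]; rfl
            · rw [if_neg hpar, if_neg hpar]; rfl
    have keyY : ∀ j : Fin q,
        Y j * (if Even ((j : ℕ) + (p + 2 - p % 2)) then C else C.map (starRingEnd ℂ)) =
          ((if Even ((j : ℕ) + (p + 2 - p % 2)) then C
            else C.map (starRingEnd ℂ)).map (starRingEnd ℂ)) * Y' j := by
      intro j
      have ltk : (j : ℕ) + (p + 2 - p % 2) < rBlocks p q := by
        have := j.isLt; unfold rBlocks; omega
      ext a b
      have hL := congrFun (congrFun hM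
        ((⟨(j : ℕ) + (p + 2 - p % 2), ltk⟩ : Fin (rBlocks p q)), a))
        ((⟨(j : ℕ) + (p + 2 - p % 2), ltk⟩ : Fin (rBlocks p q)), b)
      rw [Mmul_Y X Y S j ((j : ℕ) + (p + 2 - p % 2)) rfl ltk
        ⟨(j : ℕ) + (p + 2 - p % 2), ltk⟩ a b] at hL
      rw [mulM_Y X' Y' (S.map (starRingEnd ℂ)) j ((j : ℕ) + (p + 2 - p % 2)) rfl ltk
        ⟨(j : ℕ) + (p + 2 - p % 2), ltk⟩ a b] at hL
      rw [Matrix.mul_apply, Matrix.mul_apply]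
      calc ∑ c, Y j a c *
            (if Even ((j : ℕ) + (p + 2 - p % 2)) then C else C.map (starRingEnd ℂ)) c b
          = ∑ c, Y j a c *
              S ((⟨(j : ℕ) + (p + 2 - p % 2), ltk⟩ : Fin (rBlocks p q)), c)
                ((⟨(j : ℕ) + (p + 2 - p % 2), ltk⟩ : Fin (rBlocks p q)), b) := by
            refine Finset.sum_congr rfl fun c _ => ?_
            rw [hdiag ((j : ℕ) + (p + 2 - p % 2)) ltk c b]
            by_cases hpar : Even ((j : ℕ) + (p + 2 - p % 2))
            · rw [if_pos hpar, if_pos hpar]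
            · rw [if_neg hpar, if_neg hpar]; rfl
        _ = ∑ c, (S.map (starRingEnd ℂ))
              ((⟨(j : ℕ) + (p + 2 - p % 2), ltk⟩ : Fin (rBlocks p q)), a)
              ((⟨(j : ℕ) + (p + 2 - p % 2), ltk⟩ : Fin (rBlocks p q)), c) *
                Y' j c b := hL
        _ = ∑ c, ((if Even ((j : ℕ) + (p + 2 - p % 2)) then C
              else C.map (starRingEnd ℂ)).map (starRingEnd ℂ)) a c * Y' j c b := by
            refine Finset.sum_congr rfl fun c _ => ?_
            rw [Matrix.map_apply, hdiag ((j : ℕ) + (p + 2 - p % 2)) ltk a c]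
            by_cases hpar : Even ((j : ℕ) + (p + 2 - p % 2))
            · rw [if_pos hpar, if_pos hpar]; rfl
            · rw [if_neg hpar, if_neg hpar]; rfl
    refine ⟨C, hCU, ?_, ?_, ?_, ?_⟩
    · intro j hj
      have hj' : ¬ Even ((j : ℕ)) := by
        rw [Nat.even_add_one] at hj; exact fun h => hj h
      have hk := keyX j
      rw [if_pos hj, if_neg hj', hCcc] at hk
      exact mix_of_eq hCdet hk
    · intro j hj
      have hj1 : ¬ Even ((j : ℕ) + 1) := by
        rw [Nat.odd_iff] at hj; rw [Nat.even_iff]; omega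
      have hj' : Even ((j : ℕ)) := by
        rw [Nat.odd_iff] at hj; rw [Nat.even_iff]; omega
      have hk := keyX j
      rw [if_neg hj1, if_pos hj'] at hk
      exact mix_of_eq hCcdet hk
    · intro j hj
      have hj' : Even ((j : ℕ) + (p + 2 - p % 2)) := by
        rw [Nat.odd_iff] at hj; rw [Nat.even_iff]; omega
      have hk := keyY j
      rw [if_pos hj'] at hk
      exact mix_of_eq hCcdet hk
    · intro j hj
      have hj' : ¬ Even ((j : ℕ) + (p + 2 - p % 2)) := by
        rw [Nat.even_iff] at hj ⊢; omega
      have hk := keyY j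
      rw [if_neg hj', hCcc] at hk
      exact mix_of_eq hCdet hk
  · -- reverse
    rintro ⟨C, hC, hXe, hXo, hYo, hYe⟩
    have hCdet : IsUnit C.det := (Matrix.isUnit_iff_isUnit_det C).mp hC
    have hCC : C * C⁻¹ = 1 := Matrix.mul_nonsing_inv C hCdet
    have hCC' : C⁻¹ * C = 1 := Matrix.nonsing_inv_mul C hCdet
    have hCcinv : C.map (starRingEnd ℂ) * (C⁻¹).map (starRingEnd ℂ) = 1 := by
      rw [← Matrix.map_mul, hCC, Matrix.map_one _ (map_zero _) (map_one _)]
    have hCcU : IsUnit (C.map (starRingEnd ℂ)) := (Matrix.isUnit_iff_isUnit_det _).mpr (Matrix.isUnit_det_of_right_inverse hCcinv)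
    have hCcdet : IsUnit (C.map (starRingEnd ℂ)).det :=
      (Matrix.isUnit_iff_isUnit_det _).mp hCcU
    have hCcc : (C.map (starRingEnd ℂ)).map (starRingEnd ℂ) = C := by
      ext a b; simp [Matrix.map_apply]
    set D : Fin (rBlocks p q) → Matrix (Fin n) (Fin n) ℂ :=
      fun k => if Even ((k : ℕ)) then C else C.map (starRingEnd ℂ) with hD
    set E : Fin (rBlocks p q) → Matrix (Fin n) (Fin n) ℂ :=
      fun k => if Even ((k : ℕ)) then C⁻¹ else (C⁻¹).map (starRingEnd ℂ) with hE
    have hDE : ∀ k, D k * E k = 1 := by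
      intro k
      by_cases hk : Even ((k : ℕ))
      · rw [hD, hE]; simp only [if_pos hk]; exact hCC
      · rw [hD, hE]; simp only [if_neg hk]; exact hCcinv
    set S := DiagS n p q D with hSdef
    have hSE : S * DiagS n p q E = 1 := by
      ext ⟨i, a⟩ ⟨j, b⟩
      rw [hSdef, diag_mul]
      by_cases hij : i = j
      · subst hij
        calc ∑ c, D i a c * DiagS n p q E (i, c) (i, b)
            = ∑ c, D i a c * E i c b := by
              refine Finset.sum_congr rfl fun c _ => ?_
              rw [DiagS_apply, if_pos rfl]
          _ = (D i * E i) a b := (Matrix.mul_apply).symm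
          _ = (1 : Matrix (Fin n) (Fin n) ℂ) a b := by rw [hDE]
          _ = (1 : Matrix (Fin (rBlocks p q) × Fin n) (Fin (rBlocks p q) × Fin n) ℂ)
                (i, a) (i, b) := by
              simp [Matrix.one_apply, Prod.ext_iff]
      · calc ∑ c, D i a c * DiagS n p q E (i, c) (j, b)
            = 0 := Finset.sum_eq_zero fun c _ => by
              rw [DiagS_apply, if_neg hij, mul_zero]
          _ = (1 : Matrix (Fin (rBlocks p q) × Fin n) (Fin (rBlocks p q) × Fin n) ℂ)
                (i, a) (j, b) := by
              rw [Matrix.one_apply, if_neg (by simp [Prod.ext_iff, hij])]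
    have hSU : IsUnit S := (Matrix.isUnit_iff_isUnit_det _).mpr (Matrix.isUnit_det_of_right_inverse hSE)
    have hScinv : S.map (starRingEnd ℂ) * (DiagS n p q E).map (starRingEnd ℂ) = 1 := by
      rw [← Matrix.map_mul, hSE, Matrix.map_one _ (map_zero _) (map_one _)]
    have hScU : IsUnit (S.map (starRingEnd ℂ)) := (Matrix.isUnit_iff_isUnit_det _).mpr (Matrix.isUnit_det_of_right_inverse hScinv)
    have hScdet : IsUnit (S.map (starRingEnd ℂ)).det :=
      (Matrix.isUnit_iff_isUnit_det _).mp hScU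
    have hScmap : S.map (starRingEnd ℂ) =
        DiagS n p q (fun k => (D k).map (starRingEnd ℂ)) := by
      rw [hSdef]; exact DiagS_map D
    have hDconj : ∀ (k k' : Fin (rBlocks p q)), (k : ℕ) + 1 = (k' : ℕ) →
        (D k).map (starRingEnd ℂ) = D k' := by
      intro k k' hk
      by_cases h : Even ((k : ℕ))
      · rw [hD]
        simp only [if_pos h, if_neg (show ¬ Even ((k' : ℕ)) by
          rw [← hk, Nat.even_add_one]; exact fun hh => hh h)]
      · rw [hD]
        simp only [if_neg h, if_pos (show Even ((k' : ℕ)) by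
          rw [← hk, Nat.even_add_one]; exact fun hh => h hh)]
        exact hCcc
    have hJS : Jmat n p q * S = S.map (starRingEnd ℂ) * Jmat n p q := by
      ext ⟨i, a⟩ ⟨j, b⟩
      rw [Jmul, hScmap, mulJ]
      by_cases hij : (j : ℕ) = (i : ℕ) + 1
      · have hi1 : (i : ℕ) + 1 < rBlocks p q := hij ▸ j.isLt
        rw [dif_pos hi1, if_pos (by omega), hSdef]
        simp only [DiagS_apply]
        rw [if_pos (Fin.ext (show (i : ℕ) + 1 = (j : ℕ) by omega)),
          if_pos (Fin.ext (show (i : ℕ) = (j : ℕ) - 1 by omega))]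
        exact (congrFun (congrFun (hDconj i ⟨(i : ℕ) + 1, hi1⟩ rfl) a) b).symm
      · have hz : 0 < (j : ℕ) →
            (i = (⟨(j : ℕ) - 1, Nat.lt_of_le_of_lt (Nat.sub_le _ _) j.isLt⟩ :
              Fin (rBlocks p q))) → False := by
          intro h0 h
          have h' : (i : ℕ) = (j : ℕ) - 1 := congrArg Fin.val h
          exact hij (by omega)
        by_cases hi1 : (i : ℕ) + 1 < rBlocks p q
        · rw [dif_pos hi1, hSdef]
          simp only [DiagS_apply]
          rw [if_neg (show ¬ ((⟨(i : ℕ) + 1, hi1⟩ : Fin (rBlocks p q)) = j) from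
            fun h => hij (by rw [← h]))]
          by_cases hj0 : 0 < (j : ℕ)
          · rw [if_pos hj0, if_neg (hz hj0)]
          · rw [if_neg hj0]
        · rw [dif_neg hi1]
          by_cases hj0 : 0 < (j : ℕ)
          · rw [if_pos hj0]
            simp only [DiagS_apply]
            rw [if_neg (hz hj0)]
          · rw [if_neg hj0]
    have keyX : ∀ (jX : Fin p) (k k' : Fin (rBlocks p q)), (jX : ℕ) = (k : ℕ) →
        (k' : ℕ) = (k : ℕ) + 1 →
        X jX * D k' = (D k).map (starRingEnd ℂ) * X' jX := by
      intro jX k k' hk hk'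
      rw [hDconj k k' hk'.symm]
      by_cases h : Even ((k' : ℕ))
      · rw [hD]
        simp only [if_pos h]
        exact mix_to_eq hCdet (hXe jX (by
          rw [show (jX : ℕ) + 1 = (k' : ℕ) by omega]; exact h))
      · rw [hD]
        simp only [if_neg h]
        exact mix_to_eq hCcdet (hXo jX (by
          rw [show (jX : ℕ) + 1 = (k' : ℕ) by omega]
          exact Nat.not_even_iff_odd.mp h))
    have keyY : ∀ (jY : Fin q) (k : Fin (rBlocks p q)),
        (k : ℕ) = (jY : ℕ) + (p + 2 - p % 2) →
        Y jY * D k = (D k).map (starRingEnd ℂ) * Y' jY := by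
      intro jY k hk
      by_cases h : Even ((jY : ℕ))
      · have hEk : Even ((k : ℕ)) := by
          rw [Nat.even_iff] at h ⊢; omega
        rw [hD]
        simp only [if_pos hEk]
        exact mix_to_eq hCcdet (hYo jY (Even.add_one h))
      · have hOk : ¬ Even ((k : ℕ)) := by
          rw [Nat.even_iff] at h ⊢; omega
        rw [hD]
        simp only [if_neg hOk]
        rw [hCcc]
        exact mix_to_eq hCdet (hYe jY (Odd.add_one (Nat.not_even_iff_odd.mp h)))
    have hMS : Mmat n p q X Y * S = S.map (starRingEnd ℂ) * Mmat n p q X' Y' := by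
      ext ⟨i, a⟩ ⟨j, b⟩
      rw [hScmap, hSdef, mul_diag, diag_mul]
      by_cases hx : (i : ℕ) < p ∧ (j : ℕ) = (i : ℕ) + 1
      · calc ∑ c, Mmat n p q X Y (i, a) (j, c) * D j c b
            = ∑ c, X ⟨(i : ℕ), hx.1⟩ a c * D j c b := by
              refine Finset.sum_congr rfl fun c _ => ?_
              rw [Mmat_apply_X X Y i j a c hx.1 hx.2 ⟨(i : ℕ), hx.1⟩ rfl]
          _ = (X ⟨(i : ℕ), hx.1⟩ * D j) a b := (Matrix.mul_apply).symm
          _ = ((D i).map (starRingEnd ℂ) * X' ⟨(i : ℕ), hx.1⟩) a b := by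
              rw [keyX ⟨(i : ℕ), hx.1⟩ i j rfl hx.2]
          _ = ∑ c, (D i).map (starRingEnd ℂ) a c * X' ⟨(i : ℕ), hx.1⟩ c b :=
              Matrix.mul_apply
          _ = ∑ c, (fun k => (D k).map (starRingEnd ℂ)) i a c *
                Mmat n p q X' Y' (i, c) (j, b) := by
              refine Finset.sum_congr rfl fun c _ => ?_
              rw [Mmat_apply_X X' Y' i j c b hx.1 hx.2 ⟨(i : ℕ), hx.1⟩ rfl]
      · by_cases hy : i = j ∧ p + 2 - p % 2 ≤ (i : ℕ)
        · have hiq : (i : ℕ) - (p + 2 - p % 2) < q := by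
            have := i.isLt; unfold rBlocks at this; omega
          calc ∑ c, Mmat n p q X Y (i, a) (j, c) * D j c b
              = ∑ c, Y ⟨(i : ℕ) - (p + 2 - p % 2), hiq⟩ a c * D j c b := by
                refine Finset.sum_congr rfl fun c _ => ?_
                rw [Mmat_apply_Y X Y i j a c hy.1 hy.2 ⟨(i : ℕ) - (p + 2 - p % 2), hiq⟩ rfl]
            _ = (Y ⟨(i : ℕ) - (p + 2 - p % 2), hiq⟩ * D j) a b := (Matrix.mul_apply).symm
            _ = ((D i).map (starRingEnd ℂ) * Y' ⟨(i : ℕ) - (p + 2 - p % 2), hiq⟩) a b := by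
                rw [← hy.1, keyY ⟨(i : ℕ) - (p + 2 - p % 2), hiq⟩ i
                  (show (i : ℕ) = (i : ℕ) - (p + 2 - p % 2) + (p + 2 - p % 2) by omega)]
            _ = ∑ c, (D i).map (starRingEnd ℂ) a c *
                  Y' ⟨(i : ℕ) - (p + 2 - p % 2), hiq⟩ c b := Matrix.mul_apply
            _ = ∑ c, (fun k => (D k).map (starRingEnd ℂ)) i a c *
                  Mmat n p q X' Y' (i, c) (j, b) := by
                refine Finset.sum_congr rfl fun c _ => ?_
                rw [Mmat_apply_Y X' Y' i j c b hy.1 hy.2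
                  ⟨(i : ℕ) - (p + 2 - p % 2), hiq⟩ rfl]
        · calc ∑ c, Mmat n p q X Y (i, a) (j, c) * D j c b
              = 0 := Finset.sum_eq_zero fun c _ => by
                rw [Mmat_apply_zero X Y i j a c hx hy, zero_mul]
            _ = ∑ c, (fun k => (D k).map (starRingEnd ℂ)) i a c *
                  Mmat n p q X' Y' (i, c) (j, b) := by
                refine (Finset.sum_eq_zero fun c _ => by
                  rw [Mmat_apply_zero X' Y' i j c b hx hy, mul_zero]).symm
    exact ⟨S, hSU, mix_of_eq hScdet hJS, mix_of_eq hScdet hMS⟩
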